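/- The diamond lattice M₃, regarded as a poset, is not (3,3)-representable. -/

import Mathlib

open Cardinal

universe u

/-- A poset `P` is `(α,β)`-representable if there is a set `X` and a map `h : P → Set X`
which is an order-embedding, sends existing infima of sets of cardinality `< α` to
intersections, and existing suprema of sets of cardinality `< β` to unions. -/
def IsABRepresentable (α β : Cardinal.{u}) (P : Type u) [PartialOrder P] : Prop :=
  ∃ (X : Type u) (h : P → Set X),
    (∀ p q : P, p ≤ q ↔ h p ⊆ h q) ∧
    (∀ (S : Set P) (m : P), #S < α → IsGLB S m → h m = ⋂ s ∈ S, h s) ∧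
    (∀ (T : Set P) (j : P), #T < β → IsLUB T j → h j = ⋃ t ∈ T, h t)

/-- The diamond lattice `M₃`: five elements `⊥ < a, b, c < ⊤` with `a`, `b`, `c`
pairwise incomparable. -/
inductive M3 : Type
  | bot | a | b | c | top
  deriving DecidableEq

instance : Fintype M3 :=
  ⟨{M3.bot, M3.a, M3.b, M3.c, M3.top}, fun x => by cases x <;> simp⟩

instance : LE M3 := ⟨fun x y => x = y ∨ x = M3.bot ∨ y = M3.top⟩

instance : DecidableRel ((· ≤ ·) : M3 → M3 → Prop) := fun x y =>
  inferInstanceAs (Decidable (x = y ∨ x = M3.bot ∨ y = M3.top))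

instance : PartialOrder M3 where
  le := (· ≤ ·)
  le_refl := by decide
  le_trans := by decide
  le_antisymm := by decide

lemma M3_pair_lt3 (x y : M3) : #({x, y} : Set M3) < 3 := by
  calc #({x, y} : Set M3) ≤ #({y} : Set M3) + 1 := Cardinal.mk_insert_le
  _ = 1 + 1 := by rw [Cardinal.mk_singleton]
  _ < 3 := by norm_num

lemma M3_lub_top (x y : M3) (hx : x ≠ M3.top) (hy : y ≠ M3.top) (hxy : x ≠ y)
    (hx' : x ≠ M3.bot) (hy' : y ≠ M3.bot) :
    IsLUB ({x, y} : Set M3) M3.top := by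
  constructor
  · rintro z (rfl | rfl) <;> exact Or.inr (Or.inr rfl)
  · intro u hu
    have h1 : x ≤ u := hu (Set.mem_insert _ _)
    have h2 : y ≤ u := hu (Set.mem_insert_of_mem _ rfl)
    clear hu
    revert h1 h2 hx hy hxy hx' hy'
    revert u x y; decide

lemma M3_glb_bot (x y : M3) (hx : x ≠ M3.bot) (hy : y ≠ M3.bot) (hxy : x ≠ y)
    (hx' : x ≠ M3.top) (hy' : y ≠ M3.top) :
    IsGLB ({x, y} : Set M3) M3.bot := by
  constructor
  · rintro z (rfl | rfl) <;> exact Or.inr (Or.inl rfl)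
  · intro u hu
    have h1 : u ≤ x := hu (Set.mem_insert _ _)
    have h2 : u ≤ y := hu (Set.mem_insert_of_mem _ rfl)
    clear hu
    revert h1 h2 hx hy hxy hx' hy'
    revert u x y; decide

theorem M3_not_representable33 : ¬IsABRepresentable 3 3 M3 := by
  rintro ⟨X, h, hemb, hinf, hsup⟩
  have htA := hsup {M3.a, M3.b} M3.top (M3_pair_lt3 _ _)
    (M3_lub_top _ _ (by decide) (by decide) (by decide) (by decide) (by decide))
  have htB := hsup {M3.a, M3.c} M3.top (M3_pair_lt3 _ _)
    (M3_lub_top _ _ (by decide) (by decide) (by decide) (by decide) (by decide))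
  have htC := hsup {M3.b, M3.c} M3.top (M3_pair_lt3 _ _)
    (M3_lub_top _ _ (by decide) (by decide) (by decide) (by decide) (by decide))
  have hbt := hinf {M3.b, M3.c} M3.bot (M3_pair_lt3 _ _)
    (M3_glb_bot _ _ (by decide) (by decide) (by decide) (by decide) (by decide))
  rw [Set.biUnion_pair] at htA htB htC
  rw [Set.biInter_pair] at hbt
  have hne : ¬ (h M3.top ⊆ h M3.a) := fun hs => by
    have : M3.top ≤ M3.a := (hemb _ _).mpr hs
    exact absurd this (by decide)
  obtain ⟨x, hxt, hxa⟩ := Set.not_subset.mp hne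
  have hxb : x ∈ h M3.b := by
    have := htA ▸ hxt
    rcases this with h' | h' <;> [exact absurd h' hxa; exact h']
  have hxc : x ∈ h M3.c := by
    have := htB ▸ hxt
    rcases this with h' | h' <;> [exact absurd h' hxa; exact h']
  have hxbot : x ∈ h M3.bot := by rw [hbt]; exact ⟨hxb, hxc⟩
  have hba : h M3.bot ⊆ h M3.a := (hemb _ _).mp (by decide)
  exact hxa (hba hxbot)
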